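/- Let F ⊂ ℝⁿ be a d-set with 0 < d ≤ n, i.e. there exists a Borel measure μ with support F and constants c₁, c₂ > 0 such that c₁ r^d ≤ μ(closure of B(x,r)) ≤ c₂ r^d for all x ∈ F and 0 < r ≤ 1. Then the d-dimensional Hausdorff measure restricted to F also satisfies: there exist constants C₁, C₂ > 0 with C₁ r^d ≤ H^d(F ∩ closure of B(x,r)) ≤ C₂ r^d for all x ∈ F and 0 < r ≤ 1. In particular any two d-measures on the same d-set F are mutually equivalent (each bounded above and below by constant multiples of the other on balls). -/

import Mathlib

open MeasureTheory Metric
open scoped ENNReal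
set_option maxHeartbeats 1000000

/-- A `d`-measure on a `d`-set `F ⊆ ℝⁿ`. -/
def IsDMeasure (n : ℕ) (d : ℝ) (F : Set (EuclideanSpace ℝ (Fin n)))
    (μ : Measure (EuclideanSpace ℝ (Fin n))) (c₁ c₂ : ℝ) : Prop :=
  0 < c₁ ∧ 0 < c₂ ∧ μ Fᶜ = 0 ∧ (∀ x ∈ F, ∀ r : ℝ, 0 < r → 0 < μ (ball x r)) ∧
    ∀ x ∈ F, ∀ r : ℝ, 0 < r → r ≤ 1 →
      ENNReal.ofReal (c₁ * r ^ d) ≤ μ (closedBall x r) ∧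
        μ (closedBall x r) ≤ ENNReal.ofReal (c₂ * r ^ d)

section Aux

variable {n : ℕ}

/-- Singletons have zero measure for a measure with power-type upper bounds on small balls. -/
lemma aux_singleton_zero (d : ℝ) (hd : 0 < d) (μ : Measure (EuclideanSpace ℝ (Fin n))) (c₂ : ℝ)
    (y : EuclideanSpace ℝ (Fin n))
    (h : ∀ r : ℝ, 0 < r → r ≤ 1 → μ {y} ≤ ENNReal.ofReal (c₂ * r ^ d)) : μ {y} = 0 := by
  have h1 : Filter.Tendsto (fun r : ℝ => ENNReal.ofReal (c₂ * r ^ d)) (nhdsWithin 0 (Set.Ioi 0))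
      (nhds 0) := by
    have hc : ContinuousAt (fun r : ℝ => c₂ * r ^ d) 0 :=
      continuousAt_const.mul (Real.continuousAt_rpow_const 0 d (Or.inr hd.le))
    have h2 := (ENNReal.continuous_ofReal.continuousAt.comp hc).tendsto
    simp only [Function.comp, Real.zero_rpow hd.ne', mul_zero, ENNReal.ofReal_zero] at h2
    exact h2.mono_left nhdsWithin_le_nhds
  refine le_antisymm ?_ (zero_le)
  refine ge_of_tendsto h1 ?_
  filter_upwards [Ioc_mem_nhdsGT_of_mem ⟨le_refl 0, zero_lt_one⟩] with r hr
  exact h r hr.1 hr.2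

/-- A fixed finite net whose rescalings cover every ball. -/
lemma aux_net (n : ℕ) : ∃ t : Finset (EuclideanSpace ℝ (Fin n)),
    ∀ (x : EuclideanSpace ℝ (Fin n)) (R : ℝ),
    0 < R → closedBall x R ⊆ ⋃ y ∈ t, ball (x + R • y) (R / 8) := by
  obtain ⟨t, htf, htc⟩ := (Metric.totallyBounded_iff).1
    (isCompact_closedBall (0 : EuclideanSpace ℝ (Fin n)) 1).totallyBounded (1/8) (by norm_num)
  refine ⟨htf.toFinset, fun x R hR z hz => ?_⟩
  have hw : R⁻¹ • (z - x) ∈ closedBall (0 : EuclideanSpace ℝ (Fin n)) 1 := by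
    rw [mem_closedBall, dist_zero_right, norm_smul, norm_inv, Real.norm_of_nonneg hR.le]
    rw [mem_closedBall, dist_eq_norm] at hz
    rw [inv_mul_le_iff₀ hR]
    simpa using hz
  obtain ⟨y, hy, hzy⟩ := Set.mem_iUnion₂.1 (htc hw)
  refine Set.mem_iUnion₂.2 ⟨y, htf.mem_toFinset.2 hy, ?_⟩
  rw [mem_ball] at hzy ⊢
  rw [dist_eq_norm] at hzy ⊢
  have hzx : z - (x + R • y) = R • (R⁻¹ • (z - x) - y) := by
    rw [smul_sub, smul_inv_smul₀ hR.ne']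
    abel
  rw [hzx, norm_smul, Real.norm_of_nonneg hR.le]
  calc R * ‖R⁻¹ • (z - x) - y‖ < R * (1/8) := mul_lt_mul_of_pos_left hzy hR
    _ = R / 8 := by ring

/-- Global upper bound on balls of radius up to `4`. -/
lemma aux_glob (d : ℝ) (F : Set (EuclideanSpace ℝ (Fin n)))
    (μ : Measure (EuclideanSpace ℝ (Fin n))) (c₂ : ℝ)
    (hF0 : μ Fᶜ = 0)
    (hbd : ∀ x ∈ F, ∀ r : ℝ, 0 < r → r ≤ 1 → μ (closedBall x r) ≤ ENNReal.ofReal (c₂ * r ^ d))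
    (t : Finset (EuclideanSpace ℝ (Fin n)))
    (hnet : ∀ (x : EuclideanSpace ℝ (Fin n)) (R : ℝ),
      0 < R → closedBall x R ⊆ ⋃ y ∈ t, ball (x + R • y) (R / 8)) :
    ∀ x, ∀ R : ℝ, 0 < R → R ≤ 4 →
      μ (closedBall x R) ≤ (t.card : ℝ≥0∞) * ENNReal.ofReal (c₂ * (R / 4) ^ d) := by
  intro x R hR hR4
  have hsplit : μ (closedBall x R) ≤ μ (F ∩ closedBall x R) := by
    calc μ (closedBall x R) ≤ μ ((F ∩ closedBall x R) ∪ (Fᶜ ∩ closedBall x R)) := by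
          refine measure_mono fun z hz => ?_
          by_cases hzF : z ∈ F
          · exact Or.inl ⟨hzF, hz⟩
          · exact Or.inr ⟨hzF, hz⟩
      _ ≤ μ (F ∩ closedBall x R) + μ (Fᶜ ∩ closedBall x R) := measure_union_le _ _
      _ ≤ μ (F ∩ closedBall x R) + 0 := by
          gcongr
          exact le_of_le_of_eq (measure_mono Set.inter_subset_left) hF0
      _ = μ (F ∩ closedBall x R) := add_zero _
  refine hsplit.trans ?_
  have hcov : F ∩ closedBall x R ⊆
      ⋃ y ∈ t, (F ∩ closedBall x R) ∩ ball (x + R • y) (R / 8) := by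
    intro z hz
    obtain ⟨y, hy, hzy⟩ := Set.mem_iUnion₂.1 (hnet x R hR hz.2)
    exact Set.mem_iUnion₂.2 ⟨y, hy, hz, hzy⟩
  calc μ (F ∩ closedBall x R) ≤ μ (⋃ y ∈ t, (F ∩ closedBall x R) ∩ ball (x + R • y) (R / 8)) :=
        measure_mono hcov
    _ ≤ ∑ y ∈ t, μ ((F ∩ closedBall x R) ∩ ball (x + R • y) (R / 8)) :=
        measure_biUnion_finset_le _ _
    _ ≤ ∑ _y ∈ t, ENNReal.ofReal (c₂ * (R / 4) ^ d) := by
        refine Finset.sum_le_sum fun y _ => ?_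
        rcases Set.eq_empty_or_nonempty ((F ∩ closedBall x R) ∩ ball (x + R • y) (R / 8)) with
          he | ⟨z, hz⟩
        · simp [he]
        · have hzF : z ∈ F := hz.1.1
          have hsub : (F ∩ closedBall x R) ∩ ball (x + R • y) (R / 8) ⊆
              closedBall z (R / 4) := by
            intro w hw
            rw [mem_closedBall]
            calc dist w z ≤ dist w (x + R • y) + dist (x + R • y) z :=
                  dist_triangle _ _ _
              _ ≤ R / 8 + R / 8 := by
                  refine add_le_add (le_of_lt hw.2) ?_
                  rw [dist_comm]
                  exact le_of_lt hz.2
              _ = R / 4 := by ring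
          exact (measure_mono hsub).trans
            (hbd z hzF (R / 4) (by linarith) (by linarith))
    _ = (t.card : ℝ≥0∞) * ENNReal.ofReal (c₂ * (R / 4) ^ d) := by
        rw [Finset.sum_const, nsmul_eq_mul]

/-- A maximal `δ`-separated set yields a finite covering with a cardinality bound. -/
lemma aux_pack (d : ℝ) (F : Set (EuclideanSpace ℝ (Fin n)))
    (μ : Measure (EuclideanSpace ℝ (Fin n))) (c₁ : ℝ) (hc₁ : 0 < c₁)
    (hlb : ∀ x ∈ F, ∀ r : ℝ, 0 < r → r ≤ 1 → ENNReal.ofReal (c₁ * r ^ d) ≤ μ (closedBall x r))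
    (x : EuclideanSpace ℝ (Fin n)) (r δ : ℝ) (hδ : 0 < δ) (hδr : δ ≤ r) (hr1 : r ≤ 1)
    (hfin : μ (closedBall x (2 * r)) ≠ ∞) :
    ∃ T : Finset (EuclideanSpace ℝ (Fin n)),
      (↑T : Set (EuclideanSpace ℝ (Fin n))) ⊆ F ∩ closedBall x r ∧
      (F ∩ closedBall x r ⊆ ⋃ y ∈ T, closedBall y δ) ∧
      (T.card : ℝ≥0∞) * ENNReal.ofReal (c₁ * (δ / 4) ^ d) ≤ μ (closedBall x (2 * r)) := by
  set S := F ∩ closedBall x r with hS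
  set P := {T : Set (EuclideanSpace ℝ (Fin n)) |
    T ⊆ S ∧ T.Pairwise fun a b => δ ≤ dist a b} with hP
  obtain ⟨T0, hT0⟩ : ∃ T0, Maximal (· ∈ P) T0 := by
    refine zorn_subset P fun c hcP hc => ⟨⋃₀ c, ⟨?_, ?_⟩, fun s hs => Set.subset_sUnion_of_mem hs⟩
    · exact Set.sUnion_subset fun s hs => (hcP hs).1
    · intro a ha b hb hab
      obtain ⟨s, hs, has⟩ := ha
      obtain ⟨s', hs', hbs'⟩ := hb
      rcases hc.total hs hs' with h | h
      · exact (hcP hs').2 (h has) hbs' hab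
      · exact (hcP hs).2 has (h hbs') hab
  have hT0S : T0 ⊆ S := hT0.1.1
  have hT0p : T0.Pairwise fun a b => δ ≤ dist a b := hT0.1.2
  have hcov : ∀ z ∈ S, ∃ y ∈ T0, dist z y ≤ δ := by
    intro z hz
    by_contra hcon
    push_neg at hcon
    have hins : insert z T0 ∈ P := by
      refine ⟨Set.insert_subset hz hT0S, ?_⟩
      refine (haveI : Std.Symm (fun a b : EuclideanSpace ℝ (Fin n) => δ ≤ dist a b) := ⟨fun a b h => by rwa [dist_comm]⟩; Set.pairwise_insert_of_symm) |>.2 ⟨hT0p, ?_⟩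
      intro b hb _
      exact (hcon b hb).le
    have : z ∈ T0 := hT0.2 hins (Set.subset_insert _ _) (Set.mem_insert _ _)
    have := hcon z this
    simp at this
    linarith
  have hmass : ∀ y ∈ T0, ENNReal.ofReal (c₁ * (δ / 4) ^ d) ≤ μ (ball y (δ / 2)) := by
    intro y hy
    have hyF : y ∈ F := (hT0S hy).1
    refine (hlb y hyF (δ / 4) (by linarith) (by linarith)).trans (measure_mono ?_)
    exact closedBall_subset_ball (by linarith)
  have hbig : ∀ y ∈ T0, ball y (δ / 2) ⊆ closedBall x (2 * r) := by
    intro y hy w hw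
    have hyx : dist y x ≤ r := (hT0S hy).2
    rw [mem_ball] at hw
    rw [mem_closedBall]
    calc dist w x ≤ dist w y + dist y x := dist_triangle _ _ _
      _ ≤ 2 * r := by linarith
  have hdisj : (T0 : Set (EuclideanSpace ℝ (Fin n))).PairwiseDisjoint
      fun y => ball y (δ / 2) := by
    intro a ha b hb hab
    exact ball_disjoint_ball (by simpa using hT0p ha hb hab)
  have hT0fin : T0.Finite := by
    rw [← Set.finite_coe_iff]
    have := Measure.finite_const_le_meas_of_disjoint_iUnion μ
      (ε := ENNReal.ofReal (c₁ * (δ / 4) ^ d)) (by positivity)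
      (As := fun y : T0 => ball (y : EuclideanSpace ℝ (Fin n)) (δ / 2))
      (fun y => measurableSet_ball)
      (fun a b hab => hdisj a.2 b.2 (Subtype.coe_injective.ne hab))
      (by
        refine ne_top_of_le_ne_top hfin (measure_mono ?_)
        exact Set.iUnion_subset fun y => hbig y y.2)
    have huniv : {i : T0 | ENNReal.ofReal (c₁ * (δ / 4) ^ d) ≤
        μ (ball (i : EuclideanSpace ℝ (Fin n)) (δ / 2))} = Set.univ := by
      ext i; simpa using hmass i i.2
    rw [huniv] at this
    exact Set.finite_univ_iff.1 this
  refine ⟨hT0fin.toFinset, by simpa using hT0S, ?_, ?_⟩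
  · intro z hz
    obtain ⟨y, hy, hzy⟩ := hcov z hz
    exact Set.mem_iUnion₂.2 ⟨y, hT0fin.mem_toFinset.2 hy, hzy⟩
  · calc (hT0fin.toFinset.card : ℝ≥0∞) * ENNReal.ofReal (c₁ * (δ / 4) ^ d)
        = ∑ _y ∈ hT0fin.toFinset, ENNReal.ofReal (c₁ * (δ / 4) ^ d) := by
          rw [Finset.sum_const, nsmul_eq_mul]
      _ ≤ ∑ y ∈ hT0fin.toFinset, μ (ball y (δ / 2)) :=
          Finset.sum_le_sum fun y hy => hmass y (hT0fin.mem_toFinset.1 hy)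
      _ = μ (⋃ y ∈ hT0fin.toFinset, ball y (δ / 2)) := by
          refine (measure_biUnion_finset ?_ fun y _ => measurableSet_ball).symm
          intro a ha b hb hab
          exact hdisj (hT0fin.mem_toFinset.1 ha) (hT0fin.mem_toFinset.1 hb) hab
      _ ≤ μ (closedBall x (2 * r)) :=
          measure_mono (Set.iUnion₂_subset fun y hy => hbig y (hT0fin.mem_toFinset.1 hy))

/-- Upper bound for the Hausdorff measure of `F` on balls. -/
lemma aux_upper (d : ℝ) (hd : 0 < d) (F : Set (EuclideanSpace ℝ (Fin n)))
    (μ : Measure (EuclideanSpace ℝ (Fin n))) (c₁ c₂ : ℝ) (hc₁ : 0 < c₁) (hc₂ : 0 < c₂)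
    (N : ℕ)
    (hglob : ∀ x ∈ F, ∀ R : ℝ, 0 < R → R ≤ 4 →
      μ (closedBall x R) ≤ (N : ℝ≥0∞) * ENNReal.ofReal (c₂ * (R / 4) ^ d))
    (hpack : ∀ x ∈ F, ∀ r δ : ℝ, 0 < δ → δ ≤ r → r ≤ 1 →
      μ (closedBall x (2 * r)) ≠ ∞ →
      ∃ T : Finset (EuclideanSpace ℝ (Fin n)),
        (↑T : Set (EuclideanSpace ℝ (Fin n))) ⊆ F ∩ closedBall x r ∧
        (F ∩ closedBall x r ⊆ ⋃ y ∈ T, closedBall y δ) ∧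
        (T.card : ℝ≥0∞) * ENNReal.ofReal (c₁ * (δ / 4) ^ d) ≤ μ (closedBall x (2 * r))) :
    ∀ x ∈ F, ∀ r : ℝ, 0 < r → r ≤ 1 →
      μH[d] (F ∩ closedBall x r) ≤
        ENNReal.ofReal ((((N : ℝ) + 1) * 4 ^ d * c₂ / c₁) * r ^ d) := by
  intro x hx r hr hr1
  have hball : μ (closedBall x (2 * r)) ≤
      (N : ℝ≥0∞) * ENNReal.ofReal (c₂ * (r / 2) ^ d) := by
    have := hglob x hx (2 * r) (by linarith) (by linarith)
    simpa [show 2 * r / 4 = r / 2 by ring] using this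
  have hballfin : μ (closedBall x (2 * r)) ≠ ∞ :=
    ne_top_of_le_ne_top (by simp [ENNReal.mul_ne_top]) hball
  rw [Measure.hausdorffMeasure_apply]
  refine iSup₂_le fun ρ hρ => ?_
  obtain ⟨e, he, hee⟩ : ∃ e : ℝ, 0 < e ∧ ENNReal.ofReal e ≤ ρ := by
    rcases eq_or_ne ρ ∞ with h | h
    · exact ⟨1, one_pos, by simp [h]⟩
    · exact ⟨ρ.toReal, ENNReal.toReal_pos hρ.ne' h, by rw [ENNReal.ofReal_toReal h]⟩
  set δ : ℝ := min (e / 3) r with hδdef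
  have hδ : 0 < δ := lt_min (by linarith) hr
  have hδr : δ ≤ r := min_le_right _ _
  have hδe : 2 * δ ≤ e := by
    have : δ ≤ e / 3 := min_le_left _ _
    linarith
  obtain ⟨T, hTS, hTcov, hTcard⟩ := hpack x hx r δ hδ hδr hr1 hballfin
  have hofc : ∀ (m : ℕ) (a : ℝ), 0 ≤ a →
      (m : ℝ≥0∞) * ENNReal.ofReal a = ENNReal.ofReal ((m : ℝ) * a) := by
    intro m a ha
    rw [ENNReal.ofReal_mul (Nat.cast_nonneg m), ENNReal.ofReal_natCast]
  have hcardR : (T.card : ℝ) * (c₁ * (δ / 4) ^ d) ≤ (N : ℝ) * (c₂ * (r / 2) ^ d) := by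
    refine (ENNReal.ofReal_le_ofReal_iff (by positivity)).1 ?_
    rw [← hofc _ _ (by positivity), ← hofc _ _ (by positivity)]
    exact hTcard.trans hball
  set tcov : ℕ → Set (EuclideanSpace ℝ (Fin n)) := fun k =>
    if h : k < T.card then closedBall ((T.equivFin.symm ⟨k, h⟩ : _)) δ else ∅ with htcov
  have hcovers : F ∩ closedBall x r ⊆ ⋃ k, tcov k := by
    intro z hz
    obtain ⟨y, hy, hzy⟩ := Set.mem_iUnion₂.1 (hTcov hz)
    refine Set.mem_iUnion.2 ⟨(T.equivFin ⟨y, hy⟩ : Fin T.card), ?_⟩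
    simp only [htcov, Fin.is_lt, dif_pos, Fin.eta, Equiv.symm_apply_apply]
    exact hzy
  have hdiam : ∀ y : EuclideanSpace ℝ (Fin n),
      EMetric.diam (closedBall y δ) ≤ ENNReal.ofReal (2 * δ) := by
    intro y
    refine EMetric.diam_le fun a ha b hb => ?_
    rw [edist_dist]
    refine ENNReal.ofReal_le_ofReal ?_
    calc dist a b ≤ dist a y + dist y b := dist_triangle _ _ _
      _ ≤ 2 * δ := by
          rw [mem_closedBall] at ha hb
          rw [dist_comm y b] at *
          linarith [ha, hb]
  have hdiam' : ∀ k, EMetric.diam (tcov k) ≤ ρ := by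
    intro k
    by_cases h : k < T.card
    · simp only [htcov, dif_pos h]
      exact ((hdiam _).trans ((ENNReal.ofReal_le_ofReal hδe).trans hee))
    · simp [htcov, dif_neg h]
      exact (ediam_empty).le.trans zero_le
  refine le_trans (iInf_le _ tcov) ?_
  refine le_trans (iInf_le _ hcovers) ?_
  refine le_trans (iInf_le _ hdiam') ?_
  have hterm : ∀ k, (⨆ _ : (tcov k).Nonempty, EMetric.diam (tcov k) ^ d) ≤
      (if k < T.card then ENNReal.ofReal ((2 * δ) ^ d) else 0) := by
    intro k
    by_cases h : k < T.card
    · rw [if_pos h]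
      refine iSup_le fun _ => ?_
      have h1 : EMetric.diam (tcov k) ≤ ENNReal.ofReal (2 * δ) := by
        simp only [htcov, dif_pos h]; exact hdiam _
      rw [← ENNReal.ofReal_rpow_of_pos (show (0:ℝ) < 2 * δ by linarith)]
      exact ENNReal.rpow_le_rpow h1 hd.le
    · rw [if_neg h]
      simp [htcov, dif_neg h, Set.not_nonempty_empty]
  calc (∑' k, ⨆ _ : (tcov k).Nonempty, EMetric.diam (tcov k) ^ d)
      ≤ ∑' k, (if k < T.card then ENNReal.ofReal ((2 * δ) ^ d) else 0) :=
        ENNReal.tsum_le_tsum hterm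
    _ = ∑ k ∈ Finset.range T.card, (if k < T.card then ENNReal.ofReal ((2 * δ) ^ d) else 0) := by
        refine tsum_eq_sum fun k hk => ?_
        rw [Finset.mem_range] at hk
        simp [hk]
    _ = (T.card : ℝ≥0∞) * ENNReal.ofReal ((2 * δ) ^ d) := by
        rw [Finset.sum_congr rfl fun k hk => if_pos (Finset.mem_range.1 hk),
          Finset.sum_const, Finset.card_range, nsmul_eq_mul]
    _ = ENNReal.ofReal ((T.card : ℝ) * (2 * δ) ^ d) := hofc _ _ (by positivity)
    _ ≤ ENNReal.ofReal ((((N : ℝ) + 1) * 4 ^ d * c₂ / c₁) * r ^ d) := by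
        refine ENNReal.ofReal_le_ofReal ?_
        have e1 : (2 * δ) ^ d = 8 ^ d * (δ / 4) ^ d := by
          rw [← Real.mul_rpow (by norm_num) (by positivity)]
          congr 1; ring
        have e2 : (r / 2) ^ d * 8 ^ d = 4 ^ d * r ^ d := by
          rw [← Real.mul_rpow (by positivity) (by norm_num),
            ← Real.mul_rpow (by norm_num) (by positivity)]
          congr 1; ring
        calc (T.card : ℝ) * (2 * δ) ^ d
            = ((T.card : ℝ) * (c₁ * (δ / 4) ^ d)) * (8 ^ d / c₁) := by
              rw [e1]; field_simp
          _ ≤ ((N : ℝ) * (c₂ * (r / 2) ^ d)) * (8 ^ d / c₁) :=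
              mul_le_mul_of_nonneg_right hcardR (by positivity)
          _ = (N : ℝ) * c₂ * ((r / 2) ^ d * 8 ^ d) / c₁ := by ring
          _ = (N : ℝ) * 4 ^ d * c₂ / c₁ * r ^ d := by rw [e2]; ring
          _ ≤ (((N : ℝ) + 1) * 4 ^ d * c₂ / c₁) * r ^ d := by
              have hrd : (0:ℝ) ≤ r ^ d := by positivity
              have : (N : ℝ) * 4 ^ d * c₂ / c₁ ≤ ((N : ℝ) + 1) * 4 ^ d * c₂ / c₁ := by
                gcongr
                linarith
              exact mul_le_mul_of_nonneg_right this hrd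

/-- Lower bound for the Hausdorff measure of `F` on balls (mass distribution principle). -/
lemma aux_lower (d : ℝ) (hd : 0 < d) (F : Set (EuclideanSpace ℝ (Fin n)))
    (μ : Measure (EuclideanSpace ℝ (Fin n))) (c₁ c₂ : ℝ) (hc₂ : 0 < c₂)
    (hF0 : μ Fᶜ = 0) (hsing : ∀ y ∈ F, μ {y} = 0)
    (hub : ∀ x ∈ F, ∀ r : ℝ, 0 < r → r ≤ 1 → μ (closedBall x r) ≤ ENNReal.ofReal (c₂ * r ^ d))
    (hlb : ∀ x ∈ F, ∀ r : ℝ, 0 < r → r ≤ 1 → ENNReal.ofReal (c₁ * r ^ d) ≤ μ (closedBall x r)) :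
    ∀ x ∈ F, ∀ r : ℝ, 0 < r → r ≤ 1 →
      ENNReal.ofReal (c₁ / c₂ * r ^ d) ≤ μH[d] (F ∩ closedBall x r) := by
  have hc₂0 : (ENNReal.ofReal c₂) ≠ 0 := (ENNReal.ofReal_pos.2 hc₂).ne'
  have hν : (ENNReal.ofReal c₂)⁻¹ • μ ≤ μH[d] := by
    refine Measure.le_hausdorffMeasure d _ 1 one_pos fun s hs => ?_
    rw [Measure.smul_apply, smul_eq_mul]
    rcases Set.eq_empty_or_nonempty (s ∩ F) with he | ⟨y, hys, hyF⟩
    · have : μ s = 0 := by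
        refine measure_mono_null (fun z hz => ?_) hF0
        intro hzF
        exact Set.eq_empty_iff_forall_notMem.1 he z ⟨hz, hzF⟩
      simp [this]
    · by_cases hdiam0 : EMetric.diam s = 0
      · have hsub : s ⊆ {y} := fun z hz =>
          (EMetric.diam_eq_zero_iff.1 hdiam0) hz hys
        have : μ s = 0 := measure_mono_null hsub (hsing y hyF)
        simp [this]
      · have hdne : EMetric.diam s ≠ ∞ := ne_top_of_le_ne_top (by simp) hs
        set D : ℝ := (EMetric.diam s).toReal with hD
        have hD0 : 0 < D := ENNReal.toReal_pos hdiam0 hdne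
        have hD1 : D ≤ 1 := by
          have := ENNReal.toReal_mono (by simp) hs
          exact le_of_le_of_eq this (by simp)
        have hsub : s ⊆ closedBall y D := by
          intro z hz
          rw [mem_closedBall, dist_edist]
          exact ENNReal.toReal_mono hdne (EMetric.edist_le_diam_of_mem hz hys)
        have hμs : μ s ≤ ENNReal.ofReal c₂ * EMetric.diam s ^ d := by
          calc μ s ≤ μ (closedBall y D) := measure_mono hsub
            _ ≤ ENNReal.ofReal (c₂ * D ^ d) := hub y hyF D hD0 hD1
            _ = ENNReal.ofReal c₂ * EMetric.diam s ^ d := by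
                rw [ENNReal.ofReal_mul hc₂.le, ← ENNReal.ofReal_rpow_of_pos hD0,
                  ENNReal.ofReal_toReal hdne]
        calc (ENNReal.ofReal c₂)⁻¹ * μ s ≤
            (ENNReal.ofReal c₂)⁻¹ * (ENNReal.ofReal c₂ * EMetric.diam s ^ d) := by gcongr
          _ = EMetric.diam s ^ d := by
              rw [← mul_assoc, ENNReal.inv_mul_cancel hc₂0 ENNReal.ofReal_ne_top, one_mul]
  intro x hx r hr hr1
  have hmono := Measure.le_iff'.1 hν (F ∩ closedBall x r)
  rw [Measure.smul_apply, smul_eq_mul] at hmono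
  refine le_trans ?_ hmono
  have hsplit : ENNReal.ofReal (c₁ * r ^ d) ≤ μ (F ∩ closedBall x r) := by
    refine le_trans (hlb x hx r hr hr1) ?_
    calc μ (closedBall x r) ≤ μ ((F ∩ closedBall x r) ∪ (Fᶜ ∩ closedBall x r)) := by
          refine measure_mono fun z hz => ?_
          by_cases hzF : z ∈ F
          · exact Or.inl ⟨hzF, hz⟩
          · exact Or.inr ⟨hzF, hz⟩
      _ ≤ μ (F ∩ closedBall x r) + μ (Fᶜ ∩ closedBall x r) := measure_union_le _ _
      _ ≤ μ (F ∩ closedBall x r) + 0 := by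
          gcongr
          exact le_of_le_of_eq (measure_mono Set.inter_subset_left) hF0
      _ = μ (F ∩ closedBall x r) := add_zero _
  calc ENNReal.ofReal (c₁ / c₂ * r ^ d)
      = (ENNReal.ofReal c₂)⁻¹ * ENNReal.ofReal (c₁ * r ^ d) := by
        rw [show c₁ / c₂ * r ^ d = (c₁ * r ^ d) / c₂ by ring,
          ENNReal.ofReal_div_of_pos hc₂, ENNReal.div_eq_inv_mul]
    _ ≤ (ENNReal.ofReal c₂)⁻¹ * μ (F ∩ closedBall x r) := by gcongr

end Aux

/-- If `F ⊆ ℝⁿ` is a `d`-set (carrying some `d`-measure), then the restriction of the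
`d`-dimensional Hausdorff measure to `F` is also a `d`-measure on `F`; in particular any two
`d`-measures on `F` are equivalent (mutually bounded by constant multiples on balls). -/
theorem stmt_5 (n : ℕ) (d : ℝ) (hd : 0 < d) (hdn : d ≤ n)
    (F : Set (EuclideanSpace ℝ (Fin n))) (hFc : IsClosed F) (hFne : F.Nonempty)
    (μ : Measure (EuclideanSpace ℝ (Fin n))) (c₁ c₂ : ℝ)
    (hμ : IsDMeasure n d F μ c₁ c₂) :
    (∃ C₁ C₂ : ℝ, 0 < C₁ ∧ 0 < C₂ ∧ ∀ x ∈ F, ∀ r : ℝ, 0 < r → r ≤ 1 →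
      ENNReal.ofReal (C₁ * r ^ d) ≤ μH[d] (F ∩ closedBall x r) ∧
        μH[d] (F ∩ closedBall x r) ≤ ENNReal.ofReal (C₂ * r ^ d)) ∧
    (∀ (μ₁ μ₂ : Measure (EuclideanSpace ℝ (Fin n))) (a₁ a₂ b₁ b₂ : ℝ),
      IsDMeasure n d F μ₁ a₁ a₂ → IsDMeasure n d F μ₂ b₁ b₂ →
      ∃ K : ℝ, 0 < K ∧ ∀ x ∈ F, ∀ r : ℝ, 0 < r → r ≤ 1 →
        μ₁ (closedBall x r) ≤ ENNReal.ofReal K * μ₂ (closedBall x r) ∧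
          μ₂ (closedBall x r) ≤ ENNReal.ofReal K * μ₁ (closedBall x r)) := by
  constructor
  · obtain ⟨hc₁, hc₂, hF0, hpos, hbd⟩ := hμ
    have hub : ∀ x ∈ F, ∀ r : ℝ, 0 < r → r ≤ 1 →
        μ (closedBall x r) ≤ ENNReal.ofReal (c₂ * r ^ d) :=
      fun x hx r hr hr1 => (hbd x hx r hr hr1).2
    have hlb : ∀ x ∈ F, ∀ r : ℝ, 0 < r → r ≤ 1 →
        ENNReal.ofReal (c₁ * r ^ d) ≤ μ (closedBall x r) :=
      fun x hx r hr hr1 => (hbd x hx r hr hr1).1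
    have hsing : ∀ y ∈ F, μ {y} = 0 := by
      intro y hy
      refine aux_singleton_zero d hd μ c₂ y fun r hr hr1 => ?_
      refine le_trans (measure_mono ?_) (hub y hy r hr hr1)
      simp [Set.singleton_subset_iff, mem_closedBall, hr.le]
    obtain ⟨t, hnet⟩ := aux_net n
    have hglob := aux_glob d F μ c₂ hF0 hub t hnet
    have hpack : ∀ x ∈ F, ∀ r δ : ℝ, 0 < δ → δ ≤ r → r ≤ 1 →
        μ (closedBall x (2 * r)) ≠ ∞ →
        ∃ T : Finset (EuclideanSpace ℝ (Fin n)),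
          (↑T : Set (EuclideanSpace ℝ (Fin n))) ⊆ F ∩ closedBall x r ∧
          (F ∩ closedBall x r ⊆ ⋃ y ∈ T, closedBall y δ) ∧
          (T.card : ℝ≥0∞) * ENNReal.ofReal (c₁ * (δ / 4) ^ d) ≤ μ (closedBall x (2 * r)) :=
      fun x _ r δ hδ hδr hr1 hfin => aux_pack d F μ c₁ hc₁ hlb x r δ hδ hδr hr1 hfin
    refine ⟨c₁ / c₂, ((t.card : ℝ) + 1) * 4 ^ d * c₂ / c₁, by positivity, by positivity,
      fun x hx r hr hr1 => ⟨?_, ?_⟩⟩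
    · exact aux_lower d hd F μ c₁ c₂ hc₂ hF0 hsing hub hlb x hx r hr hr1
    · exact aux_upper d hd F μ c₁ c₂ hc₁ hc₂ t.card
        (fun x hx R hR hR4 => hglob x R hR hR4) hpack x hx r hr hr1
  · intro μ₁ μ₂ a₁ a₂ b₁ b₂ h₁ h₂
    obtain ⟨ha₁, ha₂, -, -, hbd₁⟩ := h₁
    obtain ⟨hb₁, hb₂, -, -, hbd₂⟩ := h₂
    refine ⟨max (a₂ / b₁) (b₂ / a₁), lt_max_of_lt_left (by positivity), fun x hx r hr hr1 => ?_⟩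
    have key : ∀ (ν₁ ν₂ : Measure (EuclideanSpace ℝ (Fin n))) (p q : ℝ), 0 < p → 0 < q →
        ν₁ (closedBall x r) ≤ ENNReal.ofReal (q * r ^ d) →
        ENNReal.ofReal (p * r ^ d) ≤ ν₂ (closedBall x r) →
        ν₁ (closedBall x r) ≤ ENNReal.ofReal (q / p) * ν₂ (closedBall x r) := by
      intro ν₁ ν₂ p q hp hq hub' hlb'
      calc ν₁ (closedBall x r) ≤ ENNReal.ofReal (q * r ^ d) := hub'
        _ = ENNReal.ofReal (q / p) * ENNReal.ofReal (p * r ^ d) := by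
            rw [← ENNReal.ofReal_mul (by positivity)]
            congr 1
            field_simp
        _ ≤ ENNReal.ofReal (q / p) * ν₂ (closedBall x r) := by gcongr
    constructor
    · refine le_trans (key μ₁ μ₂ b₁ a₂ hb₁ ha₂ (hbd₁ x hx r hr hr1).2 (hbd₂ x hx r hr hr1).1) ?_
      gcongr
      exact le_max_left _ _
    · refine le_trans (key μ₂ μ₁ a₁ b₂ ha₁ hb₂ (hbd₂ x hx r hr hr1).2 (hbd₁ x hx r hr hr1).1) ?_
      gcongr
      exact le_max_right _ _
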